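/- Let Ω be a nonempty finite type, let E = ⟨𝓔, mod⟩ be an epistemic space over Ω, and let ÷ be a belief change operator for E. Then ÷ is an AGM contraction operator for E if and only if there exists a faithful assignment for E that is contraction-compatible with ÷. -/
import Mathlib


open Set

/-- `minSet r S` is the set of `r`-minimal elements of `S`:
`min(S, r) = {ω ∈ S : r ω ω' for all ω' ∈ S}`. -/
def minSet {Ω : Type*} (r : Ω → Ω → Prop) (S : Set Ω) : Set Ω :=
  {ω ∈ S | ∀ ω' ∈ S, r ω ω'}

/-- A linear order as a relation: total, antisymmetric and transitive. -/
def IsLinRel {Ω : Type*} (r : Ω → Ω → Prop) : Prop :=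
  (∀ a b, r a b ∨ r b a) ∧ (∀ a b, r a b → r b a → a = b) ∧
    (∀ a b c, r a b → r b c → r a c)

/-- AGM contraction operator for the epistemic space `⟨E, md⟩` (postulates C1–C7,
formulated on model sets). -/
def IsContraction {Ω E : Type*} (md : E → Set Ω) (c : E → Set Ω → E) : Prop :=
  ∀ (Ψ : E) (A B : Set Ω),
    md Ψ ⊆ md (c Ψ A) ∧
    (¬ md Ψ ⊆ A → md (c Ψ A) ⊆ md Ψ) ∧
    (A ≠ Set.univ → ¬ md (c Ψ A) ⊆ A) ∧
    md (c Ψ A) ∩ A ⊆ md Ψ ∧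
    md (c Ψ (A ∩ B)) ⊆ md (c Ψ A) ∪ md (c Ψ B) ∧
    (¬ md (c Ψ (A ∩ B)) ⊆ B → md (c Ψ B) ⊆ md (c Ψ (A ∩ B)))

/-- AGM revision operator for the epistemic space `⟨E, md⟩` (postulates R1–R6,
formulated on model sets). -/
def IsRevision {Ω E : Type*} (md : E → Set Ω) (s : E → Set Ω → E) : Prop :=
  ∀ (Ψ : E) (A B : Set Ω),
    md (s Ψ A) ⊆ A ∧
    (md Ψ ∩ A ≠ ∅ → md (s Ψ A) = md Ψ ∩ A) ∧
    (A ≠ ∅ → md (s Ψ A) ≠ ∅) ∧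
    md (s Ψ A) ∩ B ⊆ md (s Ψ (A ∩ B)) ∧
    (md (s Ψ A) ∩ B ≠ ∅ → md (s Ψ (A ∩ B)) ⊆ md (s Ψ A) ∩ B)

/-- Postulate (ZC). -/
def ZC {Ω E : Type*} (md : E → Set Ω) : Prop :=
  ∀ (Ψ : E) (M : Set Ω), md Ψ ⊆ M → ∃ Ψ' : E, md Ψ' = M

/-- Postulate (ZR1). -/
def ZR1 {Ω E : Type*} (md : E → Set Ω) : Prop :=
  ∀ ω : Ω, ∃ Ψ : E, md Ψ = {ω}

/-- Postulate (ZR2). -/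
def ZR2 {Ω E : Type*} (md : E → Set Ω) : Prop :=
  ∀ (Ψ : E) (M : Set Ω), M ⊆ md Ψ → ∃ Ψ' : E, md Ψ' = M

/-- Postulate (Unbiased). -/
def Unbiased {Ω E : Type*} (md : E → Set Ω) : Prop :=
  ∀ M : Set Ω, ∃ Ψ : E, md Ψ = M

/-- Maxichoice contraction operator. -/
def IsMaxichoiceContraction {Ω E : Type*} (md : E → Set Ω) (c : E → Set Ω → E) : Prop :=
  IsContraction md c ∧
    ∀ Ψ : E, ∃ r : Ω → Ω → Prop, IsLinRel r ∧ ∀ A : Set Ω,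
      (¬ md Ψ ⊆ A → md (c Ψ A) = md Ψ) ∧
      (md Ψ ⊆ A → md (c Ψ A) = md Ψ ∪ minSet r Aᶜ)

/-- Linear contraction operator: a maxichoice contraction operator based on one
single linear order for all epistemic states. -/
def IsLinearContraction {Ω E : Type*} (md : E → Set Ω) (c : E → Set Ω → E) : Prop :=
  IsContraction md c ∧
    ∃ r : Ω → Ω → Prop, IsLinRel r ∧ ∀ (Ψ : E) (A : Set Ω),
      (¬ md Ψ ⊆ A → md (c Ψ A) = md Ψ) ∧
      (md Ψ ⊆ A → md (c Ψ A) = md Ψ ∪ minSet r Aᶜ)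

/-- Full meet contraction operator. -/
def IsFullMeetContraction {Ω E : Type*} (md : E → Set Ω) (c : E → Set Ω → E) : Prop :=
  IsContraction md c ∧
    ∀ (Ψ : E) (A : Set Ω),
      (¬ md Ψ ⊆ A → md (c Ψ A) = md Ψ) ∧
      (md Ψ ⊆ A → md (c Ψ A) = md Ψ ∪ Aᶜ)

/-- Maxichoice revision operator. -/
def IsMaxichoiceRevision {Ω E : Type*} (md : E → Set Ω) (s : E → Set Ω → E) : Prop :=
  IsRevision md s ∧
    ∀ Ψ : E, ∃ r : Ω → Ω → Prop, IsLinRel r ∧ ∀ A : Set Ω,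
      (md Ψ ∩ A ≠ ∅ → md (s Ψ A) = md Ψ ∩ A) ∧
      (md Ψ ∩ A = ∅ → md (s Ψ A) = minSet r A)

/-- Linear revision operator: a maxichoice revision operator based on one single
linear order for all epistemic states. -/
def IsLinearRevision {Ω E : Type*} (md : E → Set Ω) (s : E → Set Ω → E) : Prop :=
  IsRevision md s ∧
    ∃ r : Ω → Ω → Prop, IsLinRel r ∧ ∀ (Ψ : E) (A : Set Ω),
      (md Ψ ∩ A ≠ ∅ → md (s Ψ A) = md Ψ ∩ A) ∧
      (md Ψ ∩ A = ∅ → md (s Ψ A) = minSet r A)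

/-- Full meet revision operator. -/
def IsFullMeetRevision {Ω E : Type*} (md : E → Set Ω) (s : E → Set Ω → E) : Prop :=
  IsRevision md s ∧
    ∀ (Ψ : E) (A : Set Ω),
      (md Ψ ∩ A ≠ ∅ → md (s Ψ A) = md Ψ ∩ A) ∧
      (md Ψ ∩ A = ∅ → md (s Ψ A) = A)


/-- A faithful assignment for `⟨E, md⟩`: each state `Ψ` is mapped to a total
preorder `≤_Ψ` on `Ω` such that `mod Ψ ≠ ∅` implies `mod Ψ = min(Ω, ≤_Ψ)`. -/
def IsFaithful {Ω E : Type*} (md : E → Set Ω) (f : E → Ω → Ω → Prop) : Prop :=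
  ∀ Ψ : E,
    (∀ a b, f Ψ a b ∨ f Ψ b a) ∧
    (∀ a b c, f Ψ a b → f Ψ b c → f Ψ a c) ∧
    (md Ψ ≠ ∅ → md Ψ = minSet (f Ψ) Set.univ)

/-- A faithful assignment is contraction-compatible with `c` if
`mod (c Ψ A) = mod Ψ ∪ min(Ω \ A, ≤_Ψ)` for all `Ψ` and `A`. -/
def ContractionCompatible {Ω E : Type*} (md : E → Set Ω) (c : E → Set Ω → E)
    (f : E → Ω → Ω → Prop) : Prop :=
  ∀ (Ψ : E) (A : Set Ω), md (c Ψ A) = md Ψ ∪ minSet (f Ψ) Aᶜ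

lemma mem_minSet {Ω : Type*} {r : Ω → Ω → Prop} {S : Set Ω} {x : Ω} :
    x ∈ minSet r S ↔ x ∈ S ∧ ∀ y ∈ S, r x y := Iff.rfl

lemma lemM {Ω E : Type*} {md : E → Set Ω} {c : E → Set Ω → E} (hc : IsContraction md c)
    (Ψ : E) {A B : Set Ω} {x : Ω} (hx : x ∈ md (c Ψ A)) (hAB : A ⊆ B) (hxB : x ∉ B) :
    x ∈ md (c Ψ B) := by
  have key : (A ∪ Bᶜ) ∩ B = A := by
    ext z
    constructor
    · rintro ⟨hz1 | hz1, hz2⟩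
      · exact hz1
      · exact absurd hz2 hz1
    · intro h; exact ⟨Or.inl h, hAB h⟩
  have h6 := (hc Ψ (A ∪ Bᶜ) B).2.2.2.2.1
  rw [key] at h6
  rcases h6 hx with h | h
  · exact (hc Ψ B B).1 ((hc Ψ (A ∪ Bᶜ) B).2.2.2.1 ⟨h, Or.inr hxB⟩)
  · exact h

lemma lemI {Ω E : Type*} {md : E → Set Ω} {c : E → Set Ω → E} (hc : IsContraction md c)
    (Ψ : E) {B B' : Set Ω} {x : Ω} (h : x ∈ md (c Ψ B)) (h' : x ∈ md (c Ψ B')) :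
    x ∈ md (c Ψ (B ∩ B')) := by
  by_cases huniv : B ∩ B' = Set.univ
  · have hB : B = Set.univ := univ_subset_iff.mp (huniv ▸ inter_subset_left)
    have hB' : B' = Set.univ := univ_subset_iff.mp (huniv ▸ inter_subset_right)
    rw [hB, hB', univ_inter]
    rw [hB] at h; exact h
  · have h3 := (hc Ψ (B ∩ B') B).2.2.1 huniv
    rw [Set.not_subset] at h3
    obtain ⟨w, hw, hw2⟩ := h3
    rcases not_and_or.mp hw2 with hwB | hwB'
    · have h7 := (hc Ψ B' B).2.2.2.2.2
      rw [inter_comm B' B] at h7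
      exact h7 (fun hsub => hwB (hsub hw)) h
    · exact (hc Ψ B B').2.2.2.2.2 (fun hsub => hwB' (hsub hw)) h'

lemma lemInter {Ω E : Type*} [DecidableEq Ω] {md : E → Set Ω} {c : E → Set Ω → E}
    (hc : IsContraction md c) (Ψ : E) (x : Ω) :
    ∀ s : Finset Ω, s.Nonempty → (∀ y ∈ s, x ∈ md (c Ψ ({x, y}ᶜ))) →
      x ∈ md (c Ψ (⋂ y ∈ s, ({x, y}ᶜ : Set Ω))) := by
  intro s
  induction s using Finset.induction_on with
  | empty => intro h; exact absurd h (by simp)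
  | @insert a s ha ih =>
    intro _ hall
    rw [Finset.set_biInter_insert]
    rcases s.eq_empty_or_nonempty with rfl | hs
    · rw [show (⋂ y ∈ (∅ : Finset Ω), ({x, y}ᶜ : Set Ω)) = Set.univ by simp, Set.inter_univ]
      exact hall a (Finset.mem_insert_self a _)
    · exact lemI hc Ψ (hall a (Finset.mem_insert_self a _))
        (ih hs (fun y hy => hall y (Finset.mem_insert_of_mem hy)))

lemma finset_min {Ω : Type*} {r : Ω → Ω → Prop} (htot : ∀ a b, r a b ∨ r b a)
    (htr : ∀ a b c, r a b → r b c → r a c) :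
    ∀ s : Finset Ω, s.Nonempty → ∃ x ∈ s, ∀ y ∈ s, r x y := by
  classical
  intro s
  induction s using Finset.induction_on with
  | empty => intro h; exact absurd h (by simp)
  | @insert a s ha ih =>
    intro _
    rcases s.eq_empty_or_nonempty with rfl | hs
    · refine ⟨a, Finset.mem_insert_self a _, ?_⟩
      intro y hy
      rcases Finset.mem_insert.mp hy with rfl | h
      · exact (htot _ _).elim id id
      · exact absurd h (by simp)
    · obtain ⟨x, hx, hmin⟩ := ih hs
      rcases htot x a with h | h
      · refine ⟨x, Finset.mem_insert_of_mem hx, ?_⟩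
        intro y hy
        rcases Finset.mem_insert.mp hy with rfl | h'
        · exact h
        · exact hmin y h'
      · refine ⟨a, Finset.mem_insert_self a _, ?_⟩
        intro y hy
        rcases Finset.mem_insert.mp hy with rfl | h'
        · exact (htot _ _).elim id id
        · exact htr a x y h (hmin y h')

lemma minSet_nonempty {Ω : Type*} [Fintype Ω] {r : Ω → Ω → Prop}
    (htot : ∀ a b, r a b ∨ r b a) (htr : ∀ a b c, r a b → r b c → r a c)
    {S : Set Ω} (hS : S.Nonempty) : (minSet r S).Nonempty := by
  classical
  obtain ⟨x, hx, hmin⟩ := finset_min htot htr S.toFinset (by rwa [Set.toFinset_nonempty])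
  exact ⟨x, Set.mem_toFinset.mp hx, fun y hy => hmin y (Set.mem_toFinset.mpr hy)⟩

/-- A belief change operator is an AGM contraction operator iff
it is contraction-compatible with some faithful assignment. -/
theorem contraction_iff_faithful_assignment {Ω E : Type*} [Fintype Ω] [Nonempty Ω]
    [Nonempty E] (md : E → Set Ω) (c : E → Set Ω → E) :
    IsContraction md c ↔
      ∃ f : E → Ω → Ω → Prop, IsFaithful md f ∧ ContractionCompatible md c f := by
  classical
  constructor
  · intro hc
    refine ⟨fun Ψ ω ω' => ω ∈ md (c Ψ ({ω, ω'}ᶜ)), ?_, ?_⟩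
    · intro Ψ
      refine ⟨?_, ?_, ?_⟩
      · -- totality
        intro a b
        have hne : ({a, b}ᶜ : Set Ω) ≠ Set.univ := by
          intro h
          have : a ∈ ({a, b}ᶜ : Set Ω) := h ▸ mem_univ a
          exact this (Or.inl rfl)
        have h3 := (hc Ψ ({a, b}ᶜ) Set.univ).2.2.1 hne
        rw [Set.not_subset] at h3
        obtain ⟨w, hw, hw2⟩ := h3
        simp only [mem_compl_iff, not_not] at hw2
        rcases hw2 with rfl | rfl
        · exact Or.inl hw
        · rw [Set.pair_comm a w] at hw
          exact Or.inr hw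
      · -- transitivity
        intro x y z hxy hyz
        have e1 : ({x, z}ᶜ : Set Ω) ∩ {x, y}ᶜ = ({x, y, z} : Set Ω)ᶜ := by
          ext w; simp only [mem_inter_iff, mem_compl_iff, mem_insert_iff, mem_singleton_iff]
          tauto
        have e2 : ({x, y}ᶜ : Set Ω) ∩ {y, z}ᶜ = ({x, y, z} : Set Ω)ᶜ := by
          ext w; simp only [mem_inter_iff, mem_compl_iff, mem_insert_iff, mem_singleton_iff]
          tauto
        have hAuniv : ({x, y, z} : Set Ω)ᶜ ≠ Set.univ := by
          intro h
          have : x ∈ ({x, y, z} : Set Ω)ᶜ := h ▸ mem_univ x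
          exact this (Or.inl rfl)
        have h7a := (hc Ψ ({x, z}ᶜ) ({x, y}ᶜ)).2.2.2.2.2
        rw [e1] at h7a
        have h7b := (hc Ψ ({x, y}ᶜ) ({y, z}ᶜ)).2.2.2.2.2
        rw [e2] at h7b
        have h3 := (hc Ψ (({x, y, z} : Set Ω)ᶜ) Set.univ).2.2.1 hAuniv
        rw [Set.not_subset] at h3
        obtain ⟨w, hw, hw2⟩ := h3
        simp only [mem_compl_iff, not_not, mem_insert_iff, mem_singleton_iff] at hw2
        have hxC : x ∈ md (c Ψ (({x, y, z} : Set Ω)ᶜ)) := by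
          rcases hw2 with rfl | rfl | rfl
          · exact hw
          · exact h7a (fun hs => (by simp : w ∉ ({x, w}ᶜ : Set Ω)) (hs hw)) hxy
          · have hyC : y ∈ md (c Ψ (({x, y, w} : Set Ω)ᶜ)) :=
              h7b (fun hs => (by simp : w ∉ ({y, w}ᶜ : Set Ω)) (hs hw)) hyz
            exact h7a (fun hs => (by simp : y ∉ ({x, y}ᶜ : Set Ω)) (hs hyC)) hxy
        refine lemM hc Ψ hxC ?_ (by simp)
        intro w hw
        simp only [mem_compl_iff, mem_insert_iff, mem_singleton_iff] at hw ⊢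
        tauto
      · -- faithfulness
        intro hne
        ext ω
        constructor
        · intro hω
          exact ⟨mem_univ ω, fun ω' _ => (hc Ψ ({ω, ω'}ᶜ) Set.univ).1 hω⟩
        · rintro ⟨-, hmin⟩
          obtain ⟨ω₀, hω₀⟩ := Set.nonempty_iff_ne_empty.mpr hne
          have h2 := (hc Ψ ({ω, ω₀}ᶜ) Set.univ).2.1
          refine h2 (fun hs => ?_) (hmin ω₀ (mem_univ ω₀))
          exact (hs hω₀) (Or.inr rfl)
    · -- compatibility
      intro Ψ A
      ext ω
      constructor
      · intro hω
        by_cases hA : ω ∈ A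
        · exact Or.inl ((hc Ψ A Set.univ).2.2.2.1 ⟨hω, hA⟩)
        · refine Or.inr ⟨hA, fun y hy => ?_⟩
          refine lemM hc Ψ hω ?_ (by simp)
          intro w hw
          simp only [mem_compl_iff, mem_insert_iff, mem_singleton_iff]
          push_neg
          constructor
          · rintro rfl; exact hA hw
          · rintro rfl; exact hy hw
      · rintro (hω | ⟨hωA, hmin⟩)
        · exact (hc Ψ A Set.univ).1 hω
        · have hs : (Aᶜ.toFinset : Finset Ω).Nonempty := ⟨ω, Set.mem_toFinset.mpr hωA⟩
          have hx := lemInter hc Ψ ω Aᶜ.toFinset hs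
            (fun y hy => hmin y (Set.mem_toFinset.mp hy))
          have eq1 : (⋂ y ∈ Aᶜ.toFinset, ({ω, y}ᶜ : Set Ω)) = A := by
            ext z
            simp only [mem_iInter, Set.mem_toFinset, mem_compl_iff, mem_insert_iff,
              mem_singleton_iff]
            constructor
            · intro h
              by_contra hz
              exact h z hz (Or.inr rfl)
            · intro hz y hy hor
              rcases hor with rfl | rfl
              · exact hωA hz
              · exact hy hz
          rw [eq1] at hx
          exact hx
  · rintro ⟨f, hf, hcomp⟩
    intro Ψ A B
    obtain ⟨htot, htr, hfa⟩ := hf Ψ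
    refine ⟨?_, ?_, ?_, ?_, ?_, ?_⟩
    · rw [hcomp]; exact subset_union_left
    · intro hns
      rw [Set.not_subset] at hns
      obtain ⟨w, hw, hwA⟩ := hns
      have hne : md Ψ ≠ ∅ := fun h => by simp [h] at hw
      have hfaith := hfa hne
      rw [hcomp]
      refine union_subset subset_rfl ?_
      rintro x ⟨hxAc, hxmin⟩
      rw [hfaith]
      refine ⟨mem_univ x, fun y _ => ?_⟩
      have hwmin : ∀ u, f Ψ w u := by
        have : w ∈ minSet (f Ψ) Set.univ := hfaith ▸ hw
        exact fun u => this.2 u (mem_univ u)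
      exact htr x w y (hxmin w hwA) (hwmin y)
    · intro hAuniv
      obtain ⟨x, hx⟩ := minSet_nonempty htot htr (nonempty_compl.mpr hAuniv)
      rw [hcomp, Set.not_subset]
      exact ⟨x, Or.inr hx, hx.1⟩
    · rw [hcomp]
      rintro x ⟨hx1 | hx1, hx2⟩
      · exact hx1
      · exact absurd hx2 hx1.1
    · rw [hcomp, hcomp, hcomp, compl_inter]
      rintro x (hx | hx)
      · exact Or.inl (Or.inl hx)
      · rcases hx.1 with hA | hB
        · exact Or.inl (Or.inr ⟨hA, fun y hy => hx.2 y (Or.inl hy)⟩)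
        · exact Or.inr (Or.inr ⟨hB, fun y hy => hx.2 y (Or.inr hy)⟩)
    · intro hns
      rw [hcomp Ψ (A ∩ B), compl_inter] at hns
      rw [hcomp Ψ B, hcomp Ψ (A ∩ B), compl_inter]
      rw [Set.not_subset] at hns
      obtain ⟨w, hw, hwB⟩ := hns
      have hwkey : w ∈ Bᶜ ∧ ∀ y ∈ Aᶜ ∪ Bᶜ, f Ψ w y := by
        rcases hw with hw | hw
        · have hne : md Ψ ≠ ∅ := fun h => by simp [h] at hw
          have : w ∈ minSet (f Ψ) Set.univ := (hfa hne) ▸ hw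
          exact ⟨hwB, fun y _ => this.2 y (mem_univ y)⟩
        · exact ⟨hwB, hw.2⟩
      rintro x (hx | hx)
      · exact Or.inl hx
      · refine Or.inr ⟨Or.inr hx.1, fun y hy => ?_⟩
        exact htr x w y (hx.2 w hwkey.1) (hwkey.2 y hy)
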